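/- There exists a₀ > 0 such that for every a ≥ a₀ there exist a unique μ ∈ ℝ and a unique g ∈ ℝ ∖ {0} satisfying the complex equation a² + 1 − 2μ + 2aμ·i = −2a² g · cosh(πA)/sinh(πA), where A := −2ai/(a+i). In particular there exist infinitely many triples (a, g, μ) with a > 0 and g ≠ 0 satisfying this equation, i.e. the Prandtl spiral constraint is solvable. -/

import Mathlib

/-- The Prandtl-spiral constraint: `a² + 1 − 2μ + 2aμi = −2a²g·cosh(πA)/sinh(πA)`
with `A := −2ai/(a+i)`. -/
def PrandtlConstraint (a g μ : ℝ) : Prop :=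
  ((a : ℂ) ^ 2 + 1 - 2 * (μ : ℂ) + 2 * (a : ℂ) * (μ : ℂ) * Complex.I) =
    -2 * (a : ℂ) ^ 2 * (g : ℂ) *
      (Complex.cosh ((Real.pi : ℂ) * (-2 * (a : ℂ) * Complex.I / ((a : ℂ) + Complex.I))) /
        Complex.sinh ((Real.pi : ℂ) * (-2 * (a : ℂ) * Complex.I / ((a : ℂ) + Complex.I))))

open Complex

noncomputable def Complex.abs : AbsoluteValue ℂ ℝ where
  toFun := fun z => ‖z‖
  map_mul' := norm_mul
  nonneg' := norm_nonneg
  eq_zero' _ := norm_eq_zero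
  add_le' := norm_add_le

@[simp] lemma Complex.abs_apply (z : ℂ) : Complex.abs z = ‖z‖ := rfl

lemma Complex.abs_two : Complex.abs 2 = 2 := by simp

lemma Complex.sq_abs (z : ℂ) : Complex.abs z ^ 2 = Complex.normSq z := Complex.sq_norm z

lemma Complex.abs_ofReal (r : ℝ) : Complex.abs (r : ℂ) = |r| := by simp

lemma Complex.abs_re_le_abs (z : ℂ) : |z.re| ≤ Complex.abs z := Complex.abs_re_le_norm z

-- approximation lemmas
lemma exp_cubic (x : ℂ) (hx : Complex.abs x ≤ 1) :
    Complex.abs (Complex.exp x - (1 + x + x^2/2)) ≤ (2/9) * Complex.abs x ^ 3 := by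
  have h := Complex.exp_bound hx (n := 3) (by norm_num)
  have hs : (∑ m ∈ Finset.range 3, x ^ m / (Nat.factorial m)) = 1 + x + x^2/2 := by
    simp [Finset.sum_range_succ, Nat.factorial]
  rw [hs] at h
  calc Complex.abs (Complex.exp x - (1 + x + x^2/2)) ≤
      Complex.abs x ^ 3 * ((Nat.succ 3 : ℝ) * ((Nat.factorial 3 : ℝ) * 3)⁻¹) := h
    _ = (2/9) * Complex.abs x ^ 3 := by norm_num [Nat.factorial]; ring

lemma sinh_cubic (x : ℂ) (hx : Complex.abs x ≤ 1) :
    Complex.abs (Complex.sinh x - x) ≤ (2/9) * Complex.abs x ^ 3 := by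
  have h1 := exp_cubic x hx
  have h2 := exp_cubic (-x) (by simpa using hx)
  have e : Complex.sinh x - x =
      ((Complex.exp x - (1 + x + x^2/2)) - (Complex.exp (-x) - (1 + (-x) + (-x)^2/2)))/2 := by
    unfold Complex.sinh; ring
  rw [e]
  rw [map_div₀, Complex.abs_two]
  have := Complex.abs.sub_le_add (Complex.exp x - (1 + x + x^2/2))
    (Complex.exp (-x) - (1 + (-x) + (-x)^2/2))
  have hnx : Complex.abs (-x) = Complex.abs x := by simp
  rw [hnx] at h2
  linarith

lemma cosh_cubic (x : ℂ) (hx : Complex.abs x ≤ 1) :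
    Complex.abs (Complex.cosh x - (1 + x^2/2)) ≤ (2/9) * Complex.abs x ^ 3 := by
  have h1 := exp_cubic x hx
  have h2 := exp_cubic (-x) (by simpa using hx)
  have e : Complex.cosh x - (1 + x^2/2) =
      ((Complex.exp x - (1 + x + x^2/2)) + (Complex.exp (-x) - (1 + (-x) + (-x)^2/2)))/2 := by
    unfold Complex.cosh; ring
  rw [e, map_div₀, Complex.abs_two]
  have := Complex.abs.add_le (Complex.exp x - (1 + x + x^2/2))
    (Complex.exp (-x) - (1 + (-x) + (-x)^2/2))
  have hnx : Complex.abs (-x) = Complex.abs x := by simp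
  rw [hnx] at h2
  linarith

lemma key_num (x : ℂ) (hx : Complex.abs x ≤ 1) :
    Complex.abs (x * Complex.cosh x - Complex.sinh x) ≤ Complex.abs x ^ 3 := by
  have h1 := cosh_cubic x hx
  have h2 := sinh_cubic x hx
  have e : x * Complex.cosh x - Complex.sinh x =
      x * (Complex.cosh x - (1 + x^2/2)) - (Complex.sinh x - x) + x^3/2 := by ring
  have t1 : Complex.abs (x * (Complex.cosh x - (1 + x^2/2)) - (Complex.sinh x - x) + x^3/2)
      ≤ Complex.abs (x * (Complex.cosh x - (1 + x^2/2))) + Complex.abs (Complex.sinh x - x)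
        + Complex.abs (x^3/2) := by
    have := Complex.abs.add_le (x * (Complex.cosh x - (1 + x^2/2)) - (Complex.sinh x - x)) (x^3/2)
    have := Complex.abs.sub_le_add (x * (Complex.cosh x - (1 + x^2/2))) (Complex.sinh x - x)
    linarith
  rw [e]
  have hm : Complex.abs (x * (Complex.cosh x - (1 + x^2/2)))
      = Complex.abs x * Complex.abs (Complex.cosh x - (1 + x^2/2)) := map_mul _ _ _
  have hp : Complex.abs (x^3/2) = Complex.abs x ^3 / 2 := by
    rw [map_div₀, map_pow, Complex.abs_two]
  have h0 : 0 ≤ Complex.abs x := Complex.abs.nonneg x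
  have h4 : Complex.abs x ^ 4 ≤ Complex.abs x ^ 3 := pow_le_pow_of_le_one h0 hx (by norm_num)
  nlinarith [mul_le_mul_of_nonneg_left h1 h0, Complex.abs.nonneg (Complex.cosh x - (1 + x^2/2))]

lemma sinh_lower (x : ℂ) (hx : Complex.abs x ≤ 1) :
    (7/9) * Complex.abs x ≤ Complex.abs (Complex.sinh x) := by
  have h2 := sinh_cubic x hx
  have t : Complex.abs x ≤ Complex.abs (x - Complex.sinh x) + Complex.abs (Complex.sinh x) := by
    have := Complex.abs.add_le (x - Complex.sinh x) (Complex.sinh x)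
    simpa using this
  have e : Complex.abs (x - Complex.sinh x) = Complex.abs (Complex.sinh x - x) :=
    Complex.abs.map_sub x (Complex.sinh x)
  have h0 : 0 ≤ Complex.abs x := Complex.abs.nonneg x
  have h3 : Complex.abs x ^ 3 ≤ Complex.abs x := by
    calc Complex.abs x ^ 3 ≤ Complex.abs x ^ 1 := pow_le_pow_of_le_one h0 hx (by norm_num)
      _ = Complex.abs x := pow_one _
  linarith

set_option maxHeartbeats 1000000 in
private lemma core (a : ℝ) (ha : 100 ≤ a) :
    ∃! p : ℝ × ℝ, p.2 ≠ 0 ∧ PrandtlConstraint a p.2 p.1 := by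
  have hπ := Real.pi_pos
  have hπ4 : Real.pi < 3.15 := Real.pi_lt_d2
  have ha0 : (0:ℝ) < a := by linarith
  have hane : (a:ℝ) ≠ 0 := ne_of_gt ha0
  have hq : (0:ℝ) < a^2 + 1 := by positivity
  set k : ℝ := 2*Real.pi/(a^2+1) with hk
  have hkpos : 0 < k := by positivity
  set w : ℂ := -(k:ℂ) * ((a:ℂ) - Complex.I) with hw
  have hcqne : ((a:ℂ)^2 + 1) ≠ 0 := by
    have : ((a:ℂ)^2 + 1) = ((a^2+1 : ℝ) : ℂ) := by push_cast; ring
    rw [this, Ne, Complex.ofReal_eq_zero]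
    exact ne_of_gt hq
  have haI : ((a:ℂ) + Complex.I) ≠ 0 := fun h => by simpa using congrArg Complex.im h
  have haI' : ((a:ℂ) - Complex.I) ≠ 0 := fun h => by simpa using congrArg Complex.im h
  -- z = w - 2πi
  have hz : (Real.pi : ℂ) * (-2 * (a:ℂ) * Complex.I / ((a:ℂ) + Complex.I))
      = w - 2*(Real.pi:ℂ)*Complex.I := by
    rw [hw, hk]
    have h2 : ((a:ℝ)^2 + 1 : ℝ) ≠ 0 := ne_of_gt hq
    push_cast
    field_simp
    ring_nf
    rw [Complex.I_sq]
    ring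
  -- periodicity
  have hsz : Complex.sinh ((Real.pi : ℂ) * (-2 * (a:ℂ) * Complex.I / ((a:ℂ) + Complex.I)))
      = Complex.sinh w := by
    rw [hz, Complex.sinh_sub]
    have h1 : Complex.sinh (2*(Real.pi:ℂ)*Complex.I) = 0 := by
      rw [Complex.sinh_mul_I, Complex.sin_two_pi, zero_mul]
    have h2 : Complex.cosh (2*(Real.pi:ℂ)*Complex.I) = 1 := by
      rw [Complex.cosh_mul_I, Complex.cos_two_pi]
    rw [h1, h2]; ring
  have hcz : Complex.cosh ((Real.pi : ℂ) * (-2 * (a:ℂ) * Complex.I / ((a:ℂ) + Complex.I)))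
      = Complex.cosh w := by
    rw [hz, Complex.cosh_sub]
    have h1 : Complex.sinh (2*(Real.pi:ℂ)*Complex.I) = 0 := by
      rw [Complex.sinh_mul_I, Complex.sin_two_pi, zero_mul]
    have h2 : Complex.cosh (2*(Real.pi:ℂ)*Complex.I) = 1 := by
      rw [Complex.cosh_mul_I, Complex.cos_two_pi]
    rw [h1, h2]; ring
  -- norm facts
  set n1 : ℝ := Complex.abs ((a:ℂ) - Complex.I) with hn1def
  have hn1 : n1 ^ 2 = a^2 + 1 := by
    rw [hn1def, Complex.sq_abs, Complex.normSq_apply]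
    simp
    ring
  have hn1pos : 0 < n1 := Complex.abs.pos haI'
  have hn1a : a ≤ n1 := by nlinarith
  have habsw : Complex.abs w = k * n1 := by
    rw [hw, map_mul, ← Complex.ofReal_neg, Complex.abs_ofReal, abs_neg, abs_of_pos hkpos, hn1def]
  have hkn : n1 * Complex.abs w = 2*Real.pi := by
    rw [habsw, hk]
    field_simp
    nlinarith
  have hw1 : Complex.abs w ≤ 1/10 := by nlinarith
  have hwne : w ≠ 0 := by
    rw [hw]
    refine mul_ne_zero (neg_ne_zero.mpr ?_) haI'
    rw [Ne, Complex.ofReal_eq_zero]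
    exact ne_of_gt hkpos
  have habswpos : 0 < Complex.abs w := Complex.abs.pos hwne
  have hw1' : Complex.abs w ≤ 1 := by linarith
  have hslow := sinh_lower w hw1'
  have hsne : Complex.sinh w ≠ 0 := by
    intro h
    rw [h, map_zero] at hslow
    nlinarith
  have hspos : 0 < Complex.abs (Complex.sinh w) := Complex.abs.pos hsne
  set c : ℂ := Complex.cosh w / Complex.sinh w with hc
  set q : ℝ := (a^2+1)/(2*Real.pi) with hqdef
  have hqpos : 0 < q := by positivity
  set E : ℂ := ((a:ℂ) - Complex.I) * (w * Complex.cosh w - Complex.sinh w) / (w * Complex.sinh w) with hE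
  have hwval : ((a:ℂ) - Complex.I) = -(q:ℂ) * w := by
    rw [hw, hqdef, hk]
    have hπne : (Real.pi : ℂ) ≠ 0 := Complex.ofReal_ne_zero.mpr (ne_of_gt hπ)
    push_cast
    field_simp
  have hid : ((a:ℂ) - Complex.I) * c = -(q:ℂ) + E := by
    rw [hc, hE, hwval]
    field_simp
    ring
  -- bound on E
  have hEabs : Complex.abs E * (Complex.abs w * Complex.abs (Complex.sinh w))
      = n1 * Complex.abs (w * Complex.cosh w - Complex.sinh w) := by
    rw [hE, map_div₀, map_mul, map_mul, ← hn1def]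
    field_simp
  have hnum := key_num w hw1'
  have hEle : Complex.abs E ≤ 9 := by
    by_contra hcon
    push_neg at hcon
    have h1 : 9 * (Complex.abs w * Complex.abs (Complex.sinh w))
        ≤ Complex.abs E * (Complex.abs w * Complex.abs (Complex.sinh w)) := by
      have := mul_pos habswpos hspos
      nlinarith
    nlinarith [sq_nonneg (Complex.abs w), mul_le_mul_of_nonneg_left hnum (le_of_lt hn1pos),
      mul_le_mul_of_nonneg_left hslow (le_of_lt habswpos)]
  have hEre : |E.re| ≤ 9 := le_trans (Complex.abs_re_le_abs E) hEle
  -- the determinant is negative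
  have hDre : (((a:ℂ) - Complex.I) * c).re = a * c.re + c.im := by
    simp [Complex.mul_re, Complex.sub_re, Complex.sub_im, Complex.I_re, Complex.I_im,
      Complex.ofReal_re, Complex.ofReal_im]
    try ring
  have hDre' : (((a:ℂ) - Complex.I) * c).re = -q + E.re := by
    rw [hid]
    simp [Complex.add_re, Complex.neg_re, Complex.ofReal_re]
  have hqbig : 9 < q := by
    rw [hqdef, lt_div_iff₀ (by positivity)]
    have h1 : (10000:ℝ) ≤ a^2 := by nlinarith
    linarith
  have hD : a * c.re + c.im < 0 := by
    rw [← hDre, hDre']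
    have := abs_le.mp hEre
    linarith
  have hDne : a * c.re + c.im ≠ 0 := ne_of_lt hD
  -- characterization of the constraint
  have hchar : ∀ g μ : ℝ, PrandtlConstraint a g μ ↔
      (a^2 + 1 - 2*μ = -2*a^2*g*c.re ∧ 2*a*μ = -2*a^2*g*c.im) := by
    intro g μ
    unfold PrandtlConstraint
    rw [hsz, hcz, ← hc]
    rw [show ((a:ℂ)^2+1-2*(μ:ℂ)+2*(a:ℂ)*(μ:ℂ)*Complex.I)
        = ((a^2+1-2*μ : ℝ):ℂ) + ((2*a*μ:ℝ):ℂ)*Complex.I by push_cast; ring]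
    rw [show (-2*(a:ℂ)^2*(g:ℂ) : ℂ) * c = ((-2*a^2*g : ℝ):ℂ)*c by push_cast; ring]
    rw [Complex.ext_iff]
    constructor
    · rintro ⟨h1, h2⟩
      simp [Complex.add_re, Complex.add_im, Complex.re_ofReal_mul, Complex.im_ofReal_mul,
        Complex.mul_re, Complex.mul_im, Complex.I_re, Complex.I_im, ← Complex.ofReal_pow,
        Complex.ofReal_re, Complex.ofReal_im] at h1 h2
      constructor <;> linarith
    · rintro ⟨h1, h2⟩
      constructor <;>
        simp [Complex.add_re, Complex.add_im, Complex.re_ofReal_mul, Complex.im_ofReal_mul,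
          Complex.mul_re, Complex.mul_im, Complex.I_re, Complex.I_im, ← Complex.ofReal_pow,
          Complex.ofReal_re, Complex.ofReal_im] <;> linarith
  -- the unique solution
  have h2aD : 2*a*(a * c.re + c.im) ≠ 0 := by
    intro h
    rcases mul_eq_zero.mp h with h' | h'
    · nlinarith
    · exact hDne h'
  refine ⟨((a^2+1)*c.im/(2*(a * c.re + c.im)), -(a^2+1)/(2*a*(a * c.re + c.im))), ⟨?_, ?_⟩, ?_⟩
  · -- g ≠ 0
    apply div_ne_zero
    · intro h; nlinarith
    · exact h2aD
  · -- the constraint holds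
    rw [hchar]
    constructor
    · field_simp
      ring
    · field_simp
  · -- uniqueness
    rintro ⟨μ', g'⟩ ⟨hg', hcon⟩
    rw [hchar] at hcon
    obtain ⟨e1, e2⟩ := hcon
    dsimp only at e1 e2 hg'
    have hμ' : μ' = -(a*g'*c.im) := by
      have h2a : (2*a) ≠ 0 := by positivity
      have : (2*a)*μ' = (2*a)*(-(a*g'*c.im)) := by linear_combination e2
      exact mul_left_cancel₀ h2a this
    have hnum : a^2+1 = -2*a*g'*(a * c.re + c.im) := by
      linear_combination e1 + 2*hμ'
    have hg'eq : g' = -(a^2+1)/(2*a*(a * c.re + c.im)) := by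
      rw [eq_div_iff h2aD]
      linear_combination hnum
    have hμ'eq : μ' = (a^2+1)*c.im/(2*(a * c.re + c.im)) := by
      rw [hμ', hg'eq]
      field_simp
    simp [Prod.ext_iff, hμ'eq, hg'eq]

/-- There exists `a₀ > 0` such that for every `a ≥ a₀` there exist a unique
`μ ∈ ℝ` and a unique `g ∈ ℝ ∖ {0}` satisfying the Prandtl constraint
`a² + 1 − 2μ + 2aμi = −2a²g·coth(πA)`, `A := −2ai/(a+i)`.  In particular there exist
infinitely many triples `(a, g, μ)` with `a > 0`, `g ≠ 0` satisfying this equation. -/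
theorem prandtl_spiral_solvable :
    (∃ a₀ : ℝ, 0 < a₀ ∧ ∀ a : ℝ, a₀ ≤ a →
      ∃! p : ℝ × ℝ, p.2 ≠ 0 ∧ PrandtlConstraint a p.2 p.1) ∧
    Set.Infinite {t : ℝ × ℝ × ℝ | 0 < t.1 ∧ t.2.1 ≠ 0 ∧ PrandtlConstraint t.1 t.2.1 t.2.2} := by
  constructor
  · exact ⟨100, by norm_num, fun a ha => core a ha⟩
  · have h : ∀ n : ℕ, ∃ p : ℝ × ℝ, p.2 ≠ 0 ∧ PrandtlConstraint (100 + n) p.2 p.1 :=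
      fun n => (core (100 + n) (le_add_of_nonneg_right (Nat.cast_nonneg n))).exists
    choose p hp1 hp2 using h
    refine Set.infinite_of_injective_forall_mem
      (f := fun n : ℕ => (((100 + n : ℝ)), (p n).2, (p n).1)) ?_ ?_
    · intro m n hmn
      have h1 : ((100 + m : ℝ)) = 100 + n := congrArg (fun t : ℝ × ℝ × ℝ => t.1) hmn
      have : (m : ℝ) = n := by linarith
      exact_mod_cast this
    · intro n
      refine ⟨by positivity, hp1 n, hp2 n⟩
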